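/- Let Γ ∈ [1727/1728, 1), R = 2(1-Γ)^{1/3}, and h_c(z) = z(1 - Γ/(1-z)). Then for every z with |z| ≤ R and every k ∈ ℕ, the k-th iterate satisfies |h_c^k(z)| ≤ 2^{-k}|z|, and consequently the series ψ̃(z) = Σ_{k≥0} h_c^k(z) converges absolutely and uniformly on {|z| < R} and defines a holomorphic function. -/
import Mathlib

noncomputable section
/-- The complex map h_c. -/
def hc (Γ : ℝ) (z : ℂ) : ℂ := z * (1 - (Γ : ℂ) / (1 - z))

theorem stmt7 (Γ : ℝ) (hΓ : Γ ∈ Set.Ico (1727 / 1728 : ℝ) 1)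
    (R : ℝ) (hR : R = 2 * (1 - Γ) ^ ((1 : ℝ) / 3)) :
    (∀ z : ℂ, ‖z‖ ≤ R → ∀ k : ℕ, ‖(hc Γ)^[k] z‖ ≤ (2 : ℝ)⁻¹ ^ k * ‖z‖) ∧
    (∀ z : ℂ, ‖z‖ < R → Summable fun k : ℕ => ‖(hc Γ)^[k] z‖) ∧
    TendstoUniformlyOn (fun n (z : ℂ) => ∑ k ∈ Finset.range n, (hc Γ)^[k] z)
      (fun z => ∑' k : ℕ, (hc Γ)^[k] z) Filter.atTop {z : ℂ | ‖z‖ < R} ∧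
    DifferentiableOn ℂ (fun z => ∑' k : ℕ, (hc Γ)^[k] z) {z : ℂ | ‖z‖ < R} := by
  obtain ⟨hΓ1, hΓ2⟩ := hΓ
  set t : ℝ := (1 - Γ) ^ ((1 : ℝ) / 3) with ht
  have hΓle : (1 - Γ) ≤ 1 / 1728 := by linarith
  have hΓpos : 0 ≤ 1 - Γ := by linarith
  have ht0 : 0 ≤ t := Real.rpow_nonneg hΓpos _
  have ht12 : t ≤ 1 / 12 := by
    calc t ≤ (1 / 1728 : ℝ) ^ ((1 : ℝ) / 3) :=
          Real.rpow_le_rpow hΓpos hΓle (by norm_num)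
      _ = 1 / 12 := by
          rw [show (1 / 1728 : ℝ) = (1 / 12 : ℝ) ^ (3 : ℕ) by norm_num,
            ← Real.rpow_natCast (1 / 12 : ℝ) 3, ← Real.rpow_mul (by norm_num)]
          norm_num
  have htcube : t ^ (3 : ℕ) = 1 - Γ := by
    rw [ht, ← Real.rpow_natCast _ 3, ← Real.rpow_mul hΓpos]
    norm_num
  have hRt : R = 2 * t := hR
  have hR6 : R ≤ 1 / 6 := by rw [hRt]; linarith
  have hR0 : 0 ≤ R := by rw [hRt]; linarith
  -- one-step contraction
  have key : ∀ z : ℂ, ‖z‖ ≤ R → ‖hc Γ z‖ ≤ 2⁻¹ * ‖z‖ := by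
    intro z hz
    have hz6 : ‖z‖ ≤ 1 / 6 := hz.trans hR6
    have hne : (1 : ℂ) - z ≠ 0 := by
      intro h
      have hz1 : z = 1 := by linear_combination -h
      rw [hz1] at hz6; norm_num at hz6
    have hform : hc Γ z = z * ((((1 - Γ : ℝ) : ℂ) - z) / (1 - z)) := by
      have h1 : (1 : ℂ) - (Γ : ℂ) / (1 - z) = (((1 - Γ : ℝ) : ℂ) - z) / (1 - z) := by
        rw [eq_div_iff hne, sub_mul, div_mul_cancel₀ _ hne]; push_cast; ring
      rw [hc, h1]
    have hnum : ‖(((1 - Γ : ℝ) : ℂ) - z)‖ ≤ (1 - Γ) + ‖z‖ := by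
      calc ‖(((1 - Γ : ℝ) : ℂ) - z)‖ ≤ ‖(((1 - Γ : ℝ)) : ℂ)‖ + ‖z‖ := norm_sub_le _ _
        _ = |1 - Γ| + ‖z‖ := by rw [Complex.norm_real, Real.norm_eq_abs]
        _ = (1 - Γ) + ‖z‖ := by rw [abs_of_nonneg hΓpos]
    have hden : 1 - ‖z‖ ≤ ‖(1 : ℂ) - z‖ := by
      have := norm_sub_norm_le (1 : ℂ) z
      simpa using this
    have hdenpos : (0 : ℝ) < ‖(1 : ℂ) - z‖ := by linarith
    have hratio : ‖(((1 - Γ : ℝ) : ℂ) - z)‖ / ‖(1 : ℂ) - z‖ ≤ 2⁻¹ := by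
      have hz2 : ‖z‖ ≤ 2 * t := by rw [← hRt]; exact hz
      rw [div_le_iff₀ hdenpos]
      nlinarith [htcube, hnum, hden, hz2, ht12, ht0]
    calc ‖hc Γ z‖ = ‖z‖ * (‖(((1 - Γ : ℝ) : ℂ) - z)‖ / ‖(1 : ℂ) - z‖) := by
          rw [hform, norm_mul, norm_div]
      _ ≤ ‖z‖ * 2⁻¹ := by
          exact mul_le_mul_of_nonneg_left hratio (norm_nonneg z)
      _ = 2⁻¹ * ‖z‖ := mul_comm _ _
  -- iterated bound
  have iter : ∀ z : ℂ, ‖z‖ ≤ R → ∀ k : ℕ, ‖(hc Γ)^[k] z‖ ≤ (2 : ℝ)⁻¹ ^ k * ‖z‖ := by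
    intro z hz k
    induction k with
    | zero => simp
    | succ k ih =>
      have hkR : ‖(hc Γ)^[k] z‖ ≤ R := by
        refine ih.trans (le_trans ?_ hz)
        have : (2 : ℝ)⁻¹ ^ k ≤ 1 := pow_le_one₀ (by norm_num) (by norm_num)
        nlinarith [norm_nonneg z]
      rw [Function.iterate_succ_apply']
      calc ‖hc Γ ((hc Γ)^[k] z)‖ ≤ 2⁻¹ * ‖(hc Γ)^[k] z‖ := key _ hkR
        _ ≤ 2⁻¹ * ((2 : ℝ)⁻¹ ^ k * ‖z‖) := by nlinarith
        _ = (2 : ℝ)⁻¹ ^ (k + 1) * ‖z‖ := by ring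
  refine ⟨iter, ?_, ?_, ?_⟩
  · -- summability
    intro z hz
    refine Summable.of_nonneg_of_le (fun k => norm_nonneg _)
      (fun k => iter z hz.le k) ?_
    exact (summable_geometric_of_lt_one (by norm_num) (by norm_num)).mul_right _
  all_goals {
    have hsum : Summable (fun k : ℕ => (2 : ℝ)⁻¹ ^ k * R) :=
      (summable_geometric_of_lt_one (by norm_num) (by norm_num)).mul_right _
    have hbound : ∀ (k : ℕ) (z : ℂ), z ∈ {z : ℂ | ‖z‖ < R} →
        ‖(hc Γ)^[k] z‖ ≤ (2 : ℝ)⁻¹ ^ k * R := by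
      intro k z hz
      refine (iter z (le_of_lt hz) k).trans ?_
      have h1 : (0:ℝ) ≤ (2 : ℝ)⁻¹ ^ k := by positivity
      have hzR : ‖z‖ < R := hz
      nlinarith [le_of_lt hzR]
    have hTU : TendstoUniformlyOn (fun n (z : ℂ) => ∑ k ∈ Finset.range n, (hc Γ)^[k] z)
        (fun z => ∑' k : ℕ, (hc Γ)^[k] z) Filter.atTop {z : ℂ | ‖z‖ < R} :=
      tendstoUniformlyOn_tsum_nat hsum hbound
    first
    | exact hTU
    | · have hopen : IsOpen {z : ℂ | ‖z‖ < R} := isOpen_lt continuous_norm continuous_const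
        have hmaps : ∀ k : ℕ, Set.MapsTo ((hc Γ)^[k]) {z : ℂ | ‖z‖ < R} {z : ℂ | ‖z‖ < R} := by
          intro k z hz
          have h1 : ‖(hc Γ)^[k] z‖ ≤ (2 : ℝ)⁻¹ ^ k * ‖z‖ := iter z (le_of_lt hz) k
          have h2 : (2 : ℝ)⁻¹ ^ k ≤ 1 := pow_le_one₀ (by norm_num) (by norm_num)
          have hz' : ‖z‖ < R := hz
          simp only [Set.mem_setOf_eq]
          nlinarith [norm_nonneg z]
        have hhc : DifferentiableOn ℂ (hc Γ) {z : ℂ | ‖z‖ < R} := by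
          intro z hz
          have hz' : ‖z‖ < R := hz
          have hne : (1 : ℂ) - z ≠ 0 := by
            intro h
            have hz1 : z = 1 := by linear_combination -h
            rw [hz1] at hz'; simp at hz'; linarith
          exact (differentiableAt_id.mul ((differentiableAt_const _).sub
            (((differentiableAt_const _).div
              ((differentiableAt_const _).sub differentiableAt_id) hne)))).differentiableWithinAt
        have hiterdiff : ∀ k : ℕ, DifferentiableOn ℂ ((hc Γ)^[k]) {z : ℂ | ‖z‖ < R} := by
          intro k
          induction k with
          | zero => simpa using differentiableOn_id
          | succ k ih =>
            rw [Function.iterate_succ']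
            exact hhc.comp ih (hmaps k)
        refine hTU.tendstoLocallyUniformlyOn.differentiableOn
          (Filter.Eventually.of_forall fun n => ?_) hopen
        exact DifferentiableOn.fun_sum fun k _ => hiterdiff k }
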